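/- Let θ ∈ [0,π), let m ∈ L¹(ℝ, ℂ) be continuous, and set M = ‖m‖_{L¹(ℝ)}. Define u(x) = (1/2) ∫_ℝ e^{−|x−y|} m(y) dy with derivative u_x(x) = −(1/2) ∫_ℝ sgn(x−y) e^{−|x−y|} m(y) dy, and set Q = (u + u_x)(ū − ū_x) and G = Re(e^{iθ}((u + u_x) m̄ − (ū − ū_x) m)). For a function g ∈ L¹(ℝ,ℂ) define (Δ^{−1}g)(x) = (1/2) ∫_ℝ e^{−|x−y|} g(y) dy and (Δ^{−1}(1 ± ∂ₓ)g)(x) = (1/2) ∫_ℝ (1 ∓ sgn(x−y)) e^{−|x−y|} g(y) dy. Define L^± = Δ^{−1}(1 ± ∂ₓ)(−G u + i Im(e^{iθ}Q) m) ∓ Δ^{−1}(G u_x). Then |L^±(x)| ≤ (5/2) M³ for every x ∈ ℝ. -/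

import Mathlib

open MeasureTheory

lemma ker_le_one (t : ℝ) : Real.exp (-|t|) ≤ 1 := by
  have := Real.exp_le_exp.mpr (neg_nonpos.mpr (abs_nonneg t))
  simpa using this

lemma abs_sign_le (t : ℝ) : |Real.sign t| ≤ 1 := by
  rcases lt_trichotomy t 0 with h|h|h
  · rw [Real.sign_of_neg h]; norm_num
  · rw [h, Real.sign_zero]; norm_num
  · rw [Real.sign_of_pos h]; norm_num

theorem source_terms_pointwise_bound
    (θ : ℝ) (hθ : θ ∈ Set.Ico 0 Real.pi)
    (m : ℝ → ℂ) (hmc : Continuous m) (hmi : Integrable m)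
    (M : ℝ) (hM : M = ∫ y : ℝ, ‖m y‖)
    (u ux : ℝ → ℂ) (Q F : ℝ → ℂ) (G : ℝ → ℝ) (Lp Lm : ℝ → ℂ)
    (hu : ∀ x : ℝ, u x = (1/2 : ℂ) * ∫ y : ℝ, ((Real.exp (-|x - y|) : ℝ) : ℂ) * m y)
    (hux : ∀ x : ℝ, ux x
      = -(1/2 : ℂ) * ∫ y : ℝ, ((Real.sign (x - y) * Real.exp (-|x - y|) : ℝ) : ℂ) * m y)
    (hQ : ∀ x : ℝ, Q x = (u x + ux x) * (starRingEnd ℂ (u x) - starRingEnd ℂ (ux x)))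
    (hG : ∀ x : ℝ, G x = (Complex.exp (θ * Complex.I) *
      ((u x + ux x) * starRingEnd ℂ (m x)
        - (starRingEnd ℂ (u x) - starRingEnd ℂ (ux x)) * m x)).re)
    (hF : ∀ x : ℝ, F x = -((G x : ℝ) : ℂ) * u x
      + Complex.I * (((Complex.exp (θ * Complex.I) * Q x).im : ℝ) : ℂ) * m x)
    (hLp : ∀ x : ℝ, Lp x
      = (1/2 : ℂ) * (∫ y : ℝ, (((1 - Real.sign (x - y)) * Real.exp (-|x - y|) : ℝ) : ℂ) * F y)
        - (1/2 : ℂ) * ∫ y : ℝ, ((Real.exp (-|x - y|) : ℝ) : ℂ) * (((G y : ℝ) : ℂ) * ux y))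
    (hLm : ∀ x : ℝ, Lm x
      = (1/2 : ℂ) * (∫ y : ℝ, (((1 + Real.sign (x - y)) * Real.exp (-|x - y|) : ℝ) : ℂ) * F y)
        + (1/2 : ℂ) * ∫ y : ℝ, ((Real.exp (-|x - y|) : ℝ) : ℂ) * (((G y : ℝ) : ℂ) * ux y)) :
    ∀ x : ℝ, ‖Lp x‖ ≤ (5/2) * M ^ 3 ∧ ‖Lm x‖ ≤ (5/2) * M ^ 3 := by
  have hM0 : 0 ≤ M := hM ▸ integral_nonneg (fun y => norm_nonneg _)
  have hexpθ : ‖Complex.exp (θ * Complex.I)‖ = 1 := by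
    rw [show ((θ : ℂ) * Complex.I) = ((θ : ℝ) : ℂ) * Complex.I from rfl]
    simp [Complex.norm_exp]
  -- bound on u
  have hub : ∀ x : ℝ, ‖u x‖ ≤ M / 2 := by
    intro x
    rw [hu x, norm_mul]
    have h2 : ‖(1/2 : ℂ)‖ = 1/2 := by norm_num
    rw [h2]
    have hI : ‖∫ y : ℝ, ((Real.exp (-|x - y|) : ℝ) : ℂ) * m y‖ ≤ M := by
      rw [hM]
      refine norm_integral_le_of_norm_le hmi.norm ?_
      filter_upwards with y
      rw [norm_mul, Complex.norm_real, Real.norm_eq_abs,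
        abs_of_pos (Real.exp_pos _)]
      exact mul_le_of_le_one_left (norm_nonneg _) (ker_le_one _)
    linarith
  have huxb : ∀ x : ℝ, ‖ux x‖ ≤ M / 2 := by
    intro x
    rw [hux x, norm_mul]
    have h2 : ‖(-(1/2) : ℂ)‖ = 1/2 := by norm_num
    rw [h2]
    have hI : ‖∫ y : ℝ, ((Real.sign (x - y) * Real.exp (-|x - y|) : ℝ) : ℂ) * m y‖ ≤ M := by
      rw [hM]
      refine norm_integral_le_of_norm_le hmi.norm ?_
      filter_upwards with y
      rw [norm_mul, Complex.norm_real, Real.norm_eq_abs, abs_mul,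
        abs_of_pos (Real.exp_pos _)]
      have h1 : |Real.sign (x - y)| * Real.exp (-|x - y|) ≤ 1 := by
        have := abs_sign_le (x - y)
        have := ker_le_one (x - y)
        nlinarith [Real.exp_pos (-|x - y|), abs_nonneg (Real.sign (x - y))]
      exact mul_le_of_le_one_left (norm_nonneg _) h1
    linarith
  -- bound on G
  have hGb : ∀ y : ℝ, |G y| ≤ 2 * M * ‖m y‖ := by
    intro y
    rw [hG y]
    calc |(Complex.exp (θ * Complex.I) * ((u y + ux y) * starRingEnd ℂ (m y)
        - (starRingEnd ℂ (u y) - starRingEnd ℂ (ux y)) * m y)).re|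
        ≤ ‖Complex.exp (θ * Complex.I) * ((u y + ux y) * starRingEnd ℂ (m y)
          - (starRingEnd ℂ (u y) - starRingEnd ℂ (ux y)) * m y)‖ :=
          Complex.abs_re_le_norm _
      _ = ‖(u y + ux y) * starRingEnd ℂ (m y)
          - (starRingEnd ℂ (u y) - starRingEnd ℂ (ux y)) * m y‖ := by
          rw [norm_mul, hexpθ, one_mul]
      _ ≤ ‖(u y + ux y) * starRingEnd ℂ (m y)‖
          + ‖(starRingEnd ℂ (u y) - starRingEnd ℂ (ux y)) * m y‖ := norm_sub_le _ _
      _ ≤ 2 * M * ‖m y‖ := by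
          rw [norm_mul, norm_mul, RCLike.norm_conj]
          have h1 : ‖u y + ux y‖ ≤ M := by
            have := norm_add_le (u y) (ux y); have := hub y; have := huxb y; linarith
          have h2 : ‖starRingEnd ℂ (u y) - starRingEnd ℂ (ux y)‖ ≤ M := by
            have := norm_sub_le (starRingEnd ℂ (u y)) (starRingEnd ℂ (ux y))
            rw [RCLike.norm_conj, RCLike.norm_conj] at this
            have := hub y; have := huxb y; linarith
          nlinarith [norm_nonneg (m y)]
  -- bound on Q
  have hQb : ∀ y : ℝ, ‖Q y‖ ≤ M ^ 2 := by
    intro y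
    rw [hQ y, norm_mul]
    have h1 : ‖u y + ux y‖ ≤ M := by
      have := norm_add_le (u y) (ux y); have := hub y; have := huxb y; linarith
    have h2 : ‖starRingEnd ℂ (u y) - starRingEnd ℂ (ux y)‖ ≤ M := by
      have := norm_sub_le (starRingEnd ℂ (u y)) (starRingEnd ℂ (ux y))
      rw [RCLike.norm_conj, RCLike.norm_conj] at this
      have := hub y; have := huxb y; linarith
    nlinarith [norm_nonneg (u y + ux y), norm_nonneg (starRingEnd ℂ (u y) - starRingEnd ℂ (ux y))]
  -- bound on F
  have hFb : ∀ y : ℝ, ‖F y‖ ≤ 2 * M ^ 2 * ‖m y‖ := by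
    intro y
    rw [hF y]
    have h1 : ‖-((G y : ℝ) : ℂ) * u y‖ ≤ M ^ 2 * ‖m y‖ := by
      rw [norm_mul, norm_neg, Complex.norm_real, Real.norm_eq_abs]
      have := hGb y; have := hub y
      nlinarith [abs_nonneg (G y), norm_nonneg (u y), norm_nonneg (m y)]
    have h2 : ‖Complex.I * (((Complex.exp (θ * Complex.I) * Q y).im : ℝ) : ℂ) * m y‖
        ≤ M ^ 2 * ‖m y‖ := by
      rw [norm_mul, norm_mul, Complex.norm_I, one_mul, Complex.norm_real, Real.norm_eq_abs]
      have him : |(Complex.exp (θ * Complex.I) * Q y).im| ≤ M ^ 2 := by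
        calc |(Complex.exp (θ * Complex.I) * Q y).im|
            ≤ ‖Complex.exp (θ * Complex.I) * Q y‖ := Complex.abs_im_le_norm _
          _ = ‖Q y‖ := by rw [norm_mul, hexpθ, one_mul]
          _ ≤ M ^ 2 := hQb y
      nlinarith [norm_nonneg (m y), abs_nonneg ((Complex.exp (θ * Complex.I) * Q y).im)]
    calc ‖-((G y : ℝ) : ℂ) * u y
          + Complex.I * (((Complex.exp (θ * Complex.I) * Q y).im : ℝ) : ℂ) * m y‖
        ≤ ‖-((G y : ℝ) : ℂ) * u y‖
          + ‖Complex.I * (((Complex.exp (θ * Complex.I) * Q y).im : ℝ) : ℂ) * m y‖ :=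
          norm_add_le _ _
      _ ≤ 2 * M ^ 2 * ‖m y‖ := by linarith
  -- bounds on the two integrals, for any sign s ∈ {+1, -1}
  have hint1 : ∀ (ε : ℝ) (x : ℝ), |ε| = 1 →
      ‖∫ y : ℝ, (((1 + ε * Real.sign (x - y)) * Real.exp (-|x - y|) : ℝ) : ℂ) * F y‖
        ≤ 4 * M ^ 3 := by
    intro ε x hε
    have hInt : Integrable (fun y : ℝ => 4 * M ^ 2 * ‖m y‖) := (hmi.norm.const_mul _)
    have h4 : (∫ y : ℝ, 4 * M ^ 2 * ‖m y‖) = 4 * M ^ 3 := by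
      rw [integral_const_mul, ← hM]; ring
    rw [← h4]
    refine norm_integral_le_of_norm_le hInt ?_
    filter_upwards with y
    rw [norm_mul, Complex.norm_real, Real.norm_eq_abs, abs_mul,
      abs_of_pos (Real.exp_pos _)]
    have hs : |1 + ε * Real.sign (x - y)| ≤ 2 := by
      have h1 := abs_sign_le (x - y)
      have : |ε * Real.sign (x - y)| ≤ 1 := by
        rw [abs_mul, hε, one_mul]; exact h1
      calc |1 + ε * Real.sign (x - y)| ≤ |(1:ℝ)| + |ε * Real.sign (x - y)| := abs_add_le _ _
        _ ≤ 2 := by rw [abs_one]; linarith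
    have hk := ker_le_one (x - y)
    have hF2 := hFb y
    have he := Real.exp_pos (-|x - y|)
    have hmn := norm_nonneg (m y)
    have hFn := norm_nonneg (F y)
    have hp : |1 + ε * Real.sign (x - y)| * Real.exp (-|x - y|) ≤ 2 := by
      nlinarith [abs_nonneg (1 + ε * Real.sign (x - y))]
    calc |1 + ε * Real.sign (x - y)| * Real.exp (-|x - y|) * ‖F y‖
        ≤ 2 * ‖F y‖ := mul_le_mul_of_nonneg_right hp hFn
      _ ≤ 4 * M ^ 2 * ‖m y‖ := by linarith
  have hint2 : ∀ x : ℝ,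
      ‖∫ y : ℝ, ((Real.exp (-|x - y|) : ℝ) : ℂ) * (((G y : ℝ) : ℂ) * ux y)‖ ≤ M ^ 3 := by
    intro x
    have hInt : Integrable (fun y : ℝ => M ^ 2 * ‖m y‖) := (hmi.norm.const_mul _)
    have h4 : (∫ y : ℝ, M ^ 2 * ‖m y‖) = M ^ 3 := by
      rw [integral_const_mul, ← hM]; ring
    rw [← h4]
    refine norm_integral_le_of_norm_le hInt ?_
    filter_upwards with y
    rw [norm_mul, norm_mul, Complex.norm_real, Complex.norm_real,
      Real.norm_eq_abs, Real.norm_eq_abs, abs_of_pos (Real.exp_pos _)]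
    have hk := ker_le_one (x - y)
    have hG2 := hGb y
    have hux2 := huxb y
    have he := Real.exp_pos (-|x - y|)
    have hmn := norm_nonneg (m y)
    have hGn := abs_nonneg (G y)
    have huxn := norm_nonneg (ux y)
    have hp : |G y| * ‖ux y‖ ≤ M ^ 2 * ‖m y‖ := by
      nlinarith [mul_le_mul hG2 hux2 huxn (by positivity : (0:ℝ) ≤ 2 * M * ‖m y‖)]
    calc Real.exp (-|x - y|) * (|G y| * ‖ux y‖)
        ≤ 1 * (|G y| * ‖ux y‖) := mul_le_mul_of_nonneg_right hk (by positivity)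
      _ ≤ M ^ 2 * ‖m y‖ := by linarith
  intro x
  constructor
  · rw [hLp x]
    have h1 := hint1 (-1) x (by norm_num)
    have h2 := hint2 x
    simp only [neg_one_mul, ← sub_eq_add_neg] at h1
    calc ‖(1/2 : ℂ) * (∫ y : ℝ, (((1 - Real.sign (x - y)) * Real.exp (-|x - y|) : ℝ) : ℂ) * F y)
        - (1/2 : ℂ) * ∫ y : ℝ, ((Real.exp (-|x - y|) : ℝ) : ℂ) * (((G y : ℝ) : ℂ) * ux y)‖
        ≤ ‖(1/2 : ℂ) * (∫ y : ℝ, (((1 - Real.sign (x - y)) * Real.exp (-|x - y|) : ℝ) : ℂ) * F y)‖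
          + ‖(1/2 : ℂ) * ∫ y : ℝ, ((Real.exp (-|x - y|) : ℝ) : ℂ) * (((G y : ℝ) : ℂ) * ux y)‖ :=
          norm_sub_le _ _
      _ ≤ 5/2 * M ^ 3 := by
          rw [norm_mul, norm_mul]
          have : ‖(1/2 : ℂ)‖ = 1/2 := by norm_num
          rw [this]
          linarith
  · rw [hLm x]
    have h1 := hint1 1 x (by norm_num)
    have h2 := hint2 x
    simp only [one_mul] at h1
    calc ‖(1/2 : ℂ) * (∫ y : ℝ, (((1 + Real.sign (x - y)) * Real.exp (-|x - y|) : ℝ) : ℂ) * F y)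
        + (1/2 : ℂ) * ∫ y : ℝ, ((Real.exp (-|x - y|) : ℝ) : ℂ) * (((G y : ℝ) : ℂ) * ux y)‖
        ≤ ‖(1/2 : ℂ) * (∫ y : ℝ, (((1 + Real.sign (x - y)) * Real.exp (-|x - y|) : ℝ) : ℂ) * F y)‖
          + ‖(1/2 : ℂ) * ∫ y : ℝ, ((Real.exp (-|x - y|) : ℝ) : ℂ) * (((G y : ℝ) : ℂ) * ux y)‖ :=
          norm_add_le _ _
      _ ≤ 5/2 * M ^ 3 := by
          rw [norm_mul, norm_mul]
          have : ‖(1/2 : ℂ)‖ = 1/2 := by norm_num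
          rw [this]
          linarith
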